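/- Let V be a nonempty topological space, W a topological space, and G a nontrivial path-connected topological group. Let f : C(V,G) → C(W,G) be a map and suppose there exist maps φ : W → V, γ : W → Aut(G) (abstract group automorphisms of G), and ψ : C(V,G) × W → G such that for every w ∈ W the map x ↦ ψ(x,w) is a group homomorphism with values in the center Z(G), ψ(x,w) = 1 whenever the coset [x] of x modulo the null-homotopic maps contains a non-surjective map, and f(x)(w) = γ(w)(ψ(x,w)·x(φ(w))) for all x ∈ C(V,G) and w ∈ W. Then f is a group homomorphism and: (i) for every w ∈ W there is a null-homotopic x ∈ C(V,G) with f(x)(w) ≠ 1; (ii) for every w ∈ W the map G → G, g ↦ f(c_g)(w), is surjective, where c_g is the constant map with value g; (iii) for every x ∈ C(V,G) with x(v) ≠ 1 for all v ∈ V, we have f(x)(w) ≠ 1 for all w ∈ W. -/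

import Mathlib

open ContinuousMap

/-- Conversely, if `f : C(V,G) → C(W,G)` has the form
`f x w = γ(w) (ψ(x,w) * x (φ w))` with `γ(w) ∈ Aut(G)` and `ψ(·,w)` a central-valued
homomorphism vanishing on cosets containing a non-surjective map, then `f` is a group
homomorphism satisfying (i), (ii), (iii). -/
theorem weighted_composition_properties {V W G : Type*} [TopologicalSpace V] [Nonempty V]
    [TopologicalSpace W] [TopologicalSpace G] [Group G] [IsTopologicalGroup G]
    [PathConnectedSpace G] [Nontrivial G]
    (f : C(V, G) → C(W, G))
    (hf : ∃ (φ : W → V) (γ : W → MulAut G) (ψ : C(V, G) → W → G),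
      (∀ w : W, ∀ x y : C(V, G), ψ (x * y) w = ψ x w * ψ y w) ∧
      (∀ (w : W) (x : C(V, G)), ψ x w ∈ Subgroup.center G) ∧
      (∀ (w : W) (x : C(V, G)),
        (∃ x₀ : C(V, G), (x₀ * x⁻¹).Homotopic 1 ∧ ¬Function.Surjective ⇑x₀) → ψ x w = 1) ∧
      (∀ (x : C(V, G)) (w : W), f x w = γ w (ψ x w * x (φ w)))) :
    (∀ x y : C(V, G), f (x * y) = f x * f y) ∧
    (∀ w : W, ∃ x : C(V, G), x.Homotopic 1 ∧ f x w ≠ 1) ∧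
    (∀ w : W, Function.Surjective (fun g : G => f (ContinuousMap.const V g) w)) ∧
    (∀ x : C(V, G), (∀ v : V, x v ≠ 1) → ∀ w : W, f x w ≠ 1) := by
  obtain ⟨φ, γ, ψ, hmul, hcen, hvan, hform⟩ := hf
  -- ψ vanishes on non-surjective maps
  have hns : ∀ (w : W) (x : C(V, G)), ¬Function.Surjective ⇑x → ψ x w = 1 := by
    intro w x hx
    exact hvan w x ⟨x, by rw [mul_inv_cancel], hx⟩
  -- constants are non-surjective
  have hconst_ns : ∀ g : G, ¬Function.Surjective ⇑(ContinuousMap.const V g) := by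
    intro g hsurj
    obtain ⟨y, hy⟩ := exists_ne g
    obtain ⟨v, hv⟩ := hsurj y
    exact hy hv.symm
  have hconstf : ∀ (g : G) (w : W), f (ContinuousMap.const V g) w = γ w g := by
    intro g w
    rw [hform, hns w _ (hconst_ns g), one_mul]
    rfl
  refine ⟨?_, ?_, ?_, ?_⟩
  · intro x y
    ext w
    have hc := (Subgroup.mem_center_iff.mp (hcen w y)) (x (φ w))
    simp only [ContinuousMap.mul_apply, hform, hmul]
    rw [← map_mul]
    congr 1
    simp only [← mul_assoc]
    rw [mul_assoc (ψ x w) (ψ y w), ← hc, ← mul_assoc]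
  · intro w
    obtain ⟨g, hg⟩ := exists_ne (1 : G)
    refine ⟨ContinuousMap.const V g, ?_, ?_⟩
    · have : (1 : C(V, G)) = ContinuousMap.const V 1 := rfl
      rw [this, ContinuousMap.homotopic_const_iff]
      exact PathConnectedSpace.joined g 1
    · rw [hconstf]
      simp only [ne_eq, map_eq_one_iff _ (MulEquiv.injective _)]
      exact hg
  · intro w g
    exact ⟨(γ w).symm g, by show f (const V _) w = g; rw [hconstf]; simp⟩
  · intro x hx w
    have hxns : ¬Function.Surjective ⇑x := by
      intro hsurj
      obtain ⟨v, hv⟩ := hsurj 1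
      exact hx v hv
    rw [hform, hns w x hxns, one_mul]
    simp only [ne_eq, map_eq_one_iff _ (MulEquiv.injective _)]
    exact hx (φ w)
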